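/- arXiv:2510.24679 — 7 statements merged into one kernel-verified Lean document; each statement's English description precedes it below -/
import Mathlib

section
/- Let P be an n×n stochastic matrix such that I - P + 1·hᵀ is invertible for every vector h with hᵀ1 = 1. Then the quantity tr((I - P + 1·hᵀ)^{-1}) is independent of the choice of h; in particular, for any two vectors h₁, h₂ with h₁ᵀ1 = h₂ᵀ1 = 1 and both matrices invertible, tr((I - P + 1·h₁ᵀ)^{-1}) = tr((I - P + 1·h₂ᵀ)^{-1}). -/
open Matrix BigOperators

section Aux

variable {n : ℕ}

lemma mul_vecMulVec' (M : Matrix (Fin n) (Fin n) ℝ) (u v : Fin n → ℝ) :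
    M * Matrix.vecMulVec u v = Matrix.vecMulVec (M *ᵥ u) v := by
  ext i j
  simp [Matrix.mul_apply, Matrix.vecMulVec_apply, Matrix.mulVec, dotProduct,
    Finset.sum_mul, mul_assoc]

lemma vecMulVec_mul' (M : Matrix (Fin n) (Fin n) ℝ) (u v : Fin n → ℝ) :
    Matrix.vecMulVec u v * M = Matrix.vecMulVec u (v ᵥ* M) := by
  ext i j
  simp [Matrix.mul_apply, Matrix.vecMulVec_apply, Matrix.vecMul, dotProduct,
    Finset.mul_sum, mul_assoc]

lemma trace_vecMulVec' (u v : Fin n → ℝ) :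
    Matrix.trace (Matrix.vecMulVec u v) = ∑ i, u i * v i := by
  simp [Matrix.trace, Matrix.diag, Matrix.vecMulVec_apply]

end Aux

theorem kemeny_trace_independent_of_h {n : ℕ}
    (P : Matrix (Fin n) (Fin n) ℝ)
    (hPnn : ∀ i j, 0 ≤ P i j) (hProw : ∀ i, ∑ j, P i j = 1)
    (hinv : ∀ h : Fin n → ℝ, ∑ i, h i = 1 →
      IsUnit (1 - P + Matrix.vecMulVec (fun _ => 1) h))
    (h₁ h₂ : Fin n → ℝ) (hs₁ : ∑ i, h₁ i = 1) (hs₂ : ∑ i, h₂ i = 1) :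
    Matrix.trace ((1 - P + Matrix.vecMulVec (fun _ => 1) h₁)⁻¹) =
      Matrix.trace ((1 - P + Matrix.vecMulVec (fun _ => 1) h₂)⁻¹) := by
  set u : Fin n → ℝ := fun _ => 1 with hu
  set A₁ := 1 - P + Matrix.vecMulVec u h₁ with hA₁
  set A₂ := 1 - P + Matrix.vecMulVec u h₂ with hA₂
  set d : Fin n → ℝ := h₂ - h₁ with hd
  have hdsum : ∑ i, d i = 0 := by
    simp [hd, Finset.sum_sub_distrib, hs₁, hs₂]
  have hU₁ : IsUnit A₁ := hinv h₁ hs₁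
  have hU₂ : IsUnit A₂ := hinv h₂ hs₂
  have hd₁ : IsUnit A₁.det := (Matrix.isUnit_iff_isUnit_det _).mp hU₁
  have hd₂ : IsUnit A₂.det := (Matrix.isUnit_iff_isUnit_det _).mp hU₂
  -- A₁ *ᵥ u = u
  have hA1u : A₁ *ᵥ u = u := by
    funext i
    simp [hA₁, Matrix.mulVec, dotProduct, Matrix.add_apply, Matrix.sub_apply,
      Matrix.one_apply, Matrix.vecMulVec_apply, hu, Finset.sum_add_distrib,
      Finset.sum_sub_distrib, hProw, hs₁]
  have hB1u : A₁⁻¹ *ᵥ u = u := by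
    have := congrArg (fun v => A₁⁻¹ *ᵥ v) hA1u
    simpa [Matrix.mulVec_mulVec, Matrix.nonsing_inv_mul A₁ hd₁] using this.symm
  -- A₂ = A₁ + vecMulVec u d
  have hA2eq : A₂ = A₁ + Matrix.vecMulVec u d := by
    ext i j
    simp [hA₂, hA₁, hd, Matrix.add_apply, Matrix.vecMulVec_apply]
    ring
  -- candidate inverse
  set X := A₁⁻¹ - Matrix.vecMulVec u (d ᵥ* A₁⁻¹) with hX
  have hright : A₂ * X = 1 := by
    set c := d ᵥ* A₁⁻¹ with hc
    have e1 : A₁ * Matrix.vecMulVec u c = Matrix.vecMulVec u c := by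
      rw [mul_vecMulVec', hA1u]
    have e2 : Matrix.vecMulVec u d * A₁⁻¹ = Matrix.vecMulVec u c := by
      rw [vecMulVec_mul']
    have e3 : Matrix.vecMulVec u d * Matrix.vecMulVec u c = 0 := by
      rw [vecMulVec_mul']
      ext i j
      simp only [Matrix.vecMulVec_apply, Matrix.vecMul, dotProduct, hu,
        Matrix.zero_apply, one_mul, mul_one]
      rw [← Finset.sum_mul, hdsum, zero_mul]
    rw [hA2eq, hX, add_mul, mul_sub, mul_sub, Matrix.mul_nonsing_inv A₁ hd₁, e1, e2, e3]
    abel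
  have : A₂⁻¹ = X := Matrix.inv_eq_right_inv hright
  rw [this, hX, Matrix.trace_sub, trace_vecMulVec']
  have : ∑ i, u i * (d ᵥ* A₁⁻¹) i = 0 := by
    have h1 : ∀ i, u i * (d ᵥ* A₁⁻¹) i = ∑ j, d j * A₁⁻¹ j i := by
      intro i; simp [hu, Matrix.vecMul, dotProduct]
    calc ∑ i, u i * (d ᵥ* A₁⁻¹) i = ∑ i, ∑ j, d j * A₁⁻¹ j i := by
          exact Finset.sum_congr rfl fun i _ => h1 i
      _ = ∑ j, d j * ∑ i, A₁⁻¹ j i := by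
          rw [Finset.sum_comm]; simp [Finset.mul_sum]
      _ = ∑ j, d j * 1 := by
          refine Finset.sum_congr rfl fun j _ => ?_
          have h2 : ∑ i, A₁⁻¹ j i = 1 := by
            have := congrFun hB1u j
            simpa [Matrix.mulVec, dotProduct, hu] using this
          rw [h2]
      _ = 0 := by simpa using hdsum
  rw [this]
  ring
end

section
/- Let P be an irreducible stochastic matrix with stationary distribution π. Then I - P + 1·πᵀ is invertible. -/
open Matrix BigOperators

lemma pow_stoch {n : ℕ} (P : Matrix (Fin n) (Fin n) ℝ)
    (hPnn : ∀ i j, 0 ≤ P i j) (hProw : ∀ i, ∑ j, P i j = 1) (k : ℕ) :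
    (∀ i j, 0 ≤ (P ^ k) i j) ∧ (∀ i, ∑ j, (P ^ k) i j = 1) := by
  induction k with
  | zero =>
    constructor <;> intro i
    · intro j; simp [Matrix.one_apply]; positivity
    · simp [Matrix.one_apply]
  | succ k ih =>
    have h1 : ∀ i j, (P ^ (k+1)) i j = ∑ l, (P ^ k) i l * P l j := by
      intro i j; rw [pow_succ, Matrix.mul_apply]
    constructor
    · intro i j; rw [h1]
      exact Finset.sum_nonneg fun l _ => mul_nonneg (ih.1 i l) (hPnn l j)
    · intro i
      simp_rw [h1]
      rw [Finset.sum_comm]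
      simp_rw [← Finset.mul_sum, hProw]
      simpa using ih.2 i

theorem fundamental_matrix_invertible {n : ℕ}
    (P : Matrix (Fin n) (Fin n) ℝ) (π : Fin n → ℝ)
    (hPnn : ∀ i j, 0 ≤ P i j) (hProw : ∀ i, ∑ j, P i j = 1)
    (hirr : ∀ i j, ∃ k, 0 < (P ^ k) i j)
    (hπnn : ∀ i, 0 ≤ π i) (hπsum : ∑ i, π i = 1)
    (hstat : Matrix.vecMul π P = π) :
    IsUnit (1 - P + Matrix.vecMulVec (fun _ => 1) π) := by
  rcases Nat.eq_zero_or_pos n with hn | hn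
  · subst hn
    exact isUnit_of_subsingleton _
  have : Nonempty (Fin n) := ⟨⟨0, hn⟩⟩
  rw [← Matrix.mulVec_injective_iff_isUnit]
  suffices key : ∀ x : Fin n → ℝ, (1 - P + Matrix.vecMulVec (fun _ => 1) π).mulVec x = 0 → x = 0 by
    intro x y hxy
    have := key (x - y) (by rw [Matrix.mulVec_sub, hxy, sub_self])
    exact sub_eq_zero.mp this
  intro x hx
  have hxi : ∀ i, x i - (∑ j, P i j * x j) + (∑ j, π j * x j) = 0 := by
    intro i
    have h := congrFun hx i
    rw [Matrix.add_mulVec, Matrix.sub_mulVec, Matrix.one_mulVec] at h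
    simpa [Matrix.mulVec, dotProduct, Matrix.vecMulVec_apply] using h
  have hπx : ∑ j, π j * x j = 0 := by
    have hsum : ∑ i, (π i * x i - π i * (∑ j, P i j * x j)
        + π i * (∑ j, π j * x j)) = 0 := by
      apply Finset.sum_eq_zero
      intro i _
      calc π i * x i - π i * (∑ j, P i j * x j) + π i * (∑ j, π j * x j)
          = π i * (x i - (∑ j, P i j * x j) + (∑ j, π j * x j)) := by ring
        _ = 0 := by rw [hxi i, mul_zero]
    rw [Finset.sum_add_distrib, Finset.sum_sub_distrib, ← Finset.sum_mul, hπsum, one_mul] at hsum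
    have hPs : ∑ i, π i * (∑ j, P i j * x j) = ∑ j, π j * x j := by
      simp_rw [Finset.mul_sum]
      rw [Finset.sum_comm]
      refine Finset.sum_congr rfl fun j _ => ?_
      have hst := congrFun hstat j
      simp only [Matrix.vecMul, dotProduct] at hst
      calc ∑ i, π i * (P i j * x j) = (∑ i, π i * P i j) * x j := by
            rw [Finset.sum_mul]; exact Finset.sum_congr rfl fun i _ => by ring
        _ = π j * x j := by rw [hst]
    rw [hPs] at hsum
    linarith
  have hfix : P *ᵥ x = x := by
    funext i
    have := hxi i
    rw [hπx] at this
    have h2 : (P *ᵥ x) i = ∑ j, P i j * x j := rfl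
    rw [h2]; linarith
  have hfixk : ∀ k, (P ^ k) *ᵥ x = x := by
    intro k
    induction k with
    | zero => simp
    | succ k ih =>
      rw [pow_succ', ← Matrix.mulVec_mulVec, ih, hfix]
  obtain ⟨i0, _, hi0⟩ := Finset.exists_max_image Finset.univ x ⟨⟨0, hn⟩, Finset.mem_univ _⟩
  have hconst : ∀ j, x j = x i0 := by
    intro j
    obtain ⟨k, hk⟩ := hirr i0 j
    obtain ⟨hknn, hkrow⟩ := pow_stoch P hPnn hProw k
    have hxle : ∀ l, x l ≤ x i0 := fun l => hi0 l (Finset.mem_univ l)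
    have hsum0 : ∑ l, (P ^ k) i0 l * (x i0 - x l) = 0 := by
      simp_rw [mul_sub]
      rw [Finset.sum_sub_distrib, ← Finset.sum_mul, hkrow i0, one_mul]
      have hfk := congrFun (hfixk k) i0
      have h2 : ((P ^ k) *ᵥ x) i0 = ∑ l, (P ^ k) i0 l * x l := rfl
      rw [h2] at hfk
      linarith
    have hterm : ∀ l ∈ Finset.univ, (0:ℝ) ≤ (P ^ k) i0 l * (x i0 - x l) :=
      fun l _ => mul_nonneg (hknn i0 l) (sub_nonneg.mpr (hxle l))
    have hz := (Finset.sum_eq_zero_iff_of_nonneg hterm).mp hsum0 j (Finset.mem_univ j)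
    rcases mul_eq_zero.mp hz with h | h
    · exact absurd h (ne_of_gt hk)
    · linarith
  have hzero : x i0 = 0 := by
    have h3 : ∑ j, π j * x j = ∑ j, π j * x i0 :=
      Finset.sum_congr rfl fun j _ => by rw [hconst j]
    rw [hπx, ← Finset.sum_mul, hπsum, one_mul] at h3
    linarith
  funext j
  rw [hconst j, hzero]; rfl
end

section
/- Let P be a reversible stochastic matrix with positive stationary distribution π, and let π̂ = π^{1/2} entrywise. For any stochastic matrix X with D_π X = Xᵀ D_π and π stationary, the matrix W = I - D_{π̂} X D_{π̂}^{-1} + π̂ π̂ᵀ satisfies W π̂ = (π̂ᵀπ̂) π̂, W is symmetric, and if additionally X is irreducible then W is positive definite. -/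
open Matrix BigOperators

private lemma pow_entry_nonneg {n : ℕ} (X : Matrix (Fin n) (Fin n) ℝ)
    (hXnn : ∀ i j, 0 ≤ X i j) : ∀ k i j, 0 ≤ (X ^ k) i j := by
  intro k
  induction k with
  | zero => intro i j; simp only [pow_zero, Matrix.one_apply]; split <;> norm_num
  | succ k ih =>
    intro i j
    rw [pow_succ, Matrix.mul_apply]
    exact Finset.sum_nonneg fun l _ => mul_nonneg (ih i l) (hXnn l j)

private lemma pow_entry_prop {n : ℕ} (X : Matrix (Fin n) (Fin n) ℝ)
    (hXnn : ∀ i j, 0 ≤ X i j) (u : Fin n → ℝ)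
    (h : ∀ i j, 0 < X i j → u i = u j) :
    ∀ k i j, 0 < (X ^ k) i j → u i = u j := by
  intro k
  induction k with
  | zero =>
    intro i j hij
    rcases eq_or_ne i j with rfl | hne
    · rfl
    · rw [pow_zero, Matrix.one_apply_ne hne] at hij; exact absurd hij (lt_irrefl 0)
  | succ k ih =>
    intro i j hij
    rw [pow_succ, Matrix.mul_apply] at hij
    obtain ⟨l, hl⟩ : ∃ l, 0 < (X ^ k) i l * X l j := by
      by_contra h'
      push_neg at h'
      exact absurd (Finset.sum_nonpos fun l _ => h' l) (not_le.2 hij)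
    rcases mul_pos_iff.1 hl with ⟨h1, h2⟩ | ⟨h1, _⟩
    · exact (ih i l h1).trans (h l j h2)
    · exact absurd h1 (not_lt.2 (pow_entry_nonneg X hXnn k i l))

theorem symmetrized_fundamental_matrix_posdef {n : ℕ}
    (X : Matrix (Fin n) (Fin n) ℝ) (π : Fin n → ℝ)
    (hπpos : ∀ i, 0 < π i) (hπsum : ∑ i, π i = 1)
    (hXnn : ∀ i j, 0 ≤ X i j) (hXrow : ∀ i, ∑ j, X i j = 1)
    (hrev : ∀ i j, π i * X i j = π j * X j i) :
    ((1 - Matrix.diagonal (fun i => Real.sqrt (π i)) * X *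
        Matrix.diagonal (fun i => (Real.sqrt (π i))⁻¹) +
        Matrix.vecMulVec (fun i => Real.sqrt (π i)) (fun i => Real.sqrt (π i))).mulVec
        (fun i => Real.sqrt (π i)) =
      (∑ i, Real.sqrt (π i) * Real.sqrt (π i)) • (fun i => Real.sqrt (π i))) ∧
    (1 - Matrix.diagonal (fun i => Real.sqrt (π i)) * X *
        Matrix.diagonal (fun i => (Real.sqrt (π i))⁻¹) +
        Matrix.vecMulVec (fun i => Real.sqrt (π i)) (fun i => Real.sqrt (π i))).IsSymm ∧
    ((∀ i j, ∃ k, 0 < (X ^ k) i j) →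
      (1 - Matrix.diagonal (fun i => Real.sqrt (π i)) * X *
        Matrix.diagonal (fun i => (Real.sqrt (π i))⁻¹) +
        Matrix.vecMulVec (fun i => Real.sqrt (π i)) (fun i => Real.sqrt (π i))).PosDef) := by
  set s : Fin n → ℝ := fun i => Real.sqrt (π i) with hs_def
  have hs : ∀ i, 0 < s i := fun i => Real.sqrt_pos.2 (hπpos i)
  have hss : ∀ i, s i * s i = π i := fun i => Real.mul_self_sqrt (hπpos i).le
  have hinv : ∀ i, s i * (s i)⁻¹ = 1 := fun i => mul_inv_cancel₀ (hs i).ne'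
  set W : Matrix (Fin n) (Fin n) ℝ :=
    1 - Matrix.diagonal s * X * Matrix.diagonal (fun i => (s i)⁻¹) +
      Matrix.vecMulVec s s with hW_def
  have hW : ∀ i j, W i j = (if i = j then (1:ℝ) else 0) - s i * X i j * (s j)⁻¹ + s i * s j := by
    intro i j
    rw [hW_def]
    simp only [Matrix.add_apply, Matrix.sub_apply, Matrix.one_apply,
      Matrix.mul_diagonal, Matrix.diagonal_mul, Matrix.vecMulVec_apply]
  have hcol : ∀ j, ∑ i, π i * X i j = π j := by
    intro j
    rw [Finset.sum_congr rfl fun i _ => hrev i j, ← Finset.mul_sum, hXrow, mul_one]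
  have hsum2 : ∑ i, s i * s i = 1 := by
    rw [Finset.sum_congr rfl fun i _ => hss i, hπsum]
  -- Part 1
  have part1 : W.mulVec s = (∑ i, s i * s i) • s := by
    funext i
    have hterm : ∀ j, W i j * s j = (if i = j then s j else 0) - s i * X i j + s i * π j := by
      intro j
      rw [hW i j, ← hss j]
      rcases eq_or_ne i j with rfl | h
      · simp only [eq_self_iff_true, if_true]
        linear_combination (-(s i * X i i)) * hinv i
      · simp only [if_neg h]
        linear_combination (-(s i * X i j)) * hinv j
    simp only [Matrix.mulVec, dotProduct]
    rw [Finset.sum_congr rfl fun j _ => hterm j]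
    rw [Finset.sum_add_distrib, Finset.sum_sub_distrib, Finset.sum_ite_eq,
      ← Finset.mul_sum, ← Finset.mul_sum, hXrow, hπsum]
    simp [hsum2]
  -- Part 2
  have part2 : W.IsSymm := by
    ext i j
    rw [Matrix.transpose_apply, hW i j, hW j i]
    have hr : s j * s j * X j i = s i * s i * X i j := by rw [hss, hss]; exact hrev j i
    rcases eq_or_ne i j with rfl | h
    · ring
    · simp only [if_neg h, if_neg (Ne.symm h)]
      linear_combination (-(s i * X i j * (s j)⁻¹)) * hinv i
        + (s j * X j i * (s i)⁻¹) * hinv j + (-(s i)⁻¹ * (s j)⁻¹) * hr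
  refine ⟨part1, part2, ?_⟩
  -- Part 3
  intro hirr
  have hherm : W.IsHermitian := by
    rw [Matrix.IsHermitian, Matrix.conjTranspose_eq_transpose_of_trivial]
    exact part2
  refine Matrix.posDef_iff_dotProduct_mulVec.2 ⟨hherm, ?_⟩
  intro x hx
  have hstar : star x = x := by simp
  rw [hstar]
  obtain ⟨u, hxu⟩ : ∃ u : Fin n → ℝ, ∀ i, x i = s i * u i :=
    ⟨fun i => x i / s i, fun i => by rw [eq_comm, mul_comm, div_mul_cancel₀ _ (hs i).ne']⟩
  obtain ⟨A, hA_def⟩ : ∃ A : ℝ, A = ∑ i, π i * u i ^ 2 := ⟨_, rfl⟩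
  obtain ⟨B, hB_def⟩ : ∃ B : ℝ, B = ∑ i, ∑ j, π i * X i j * (u i * u j) := ⟨_, rfl⟩
  obtain ⟨C, hC_def⟩ : ∃ C : ℝ, C = ∑ i, π i * u i := ⟨_, rfl⟩
  obtain ⟨D, hD_def⟩ : ∃ D : ℝ, D = ∑ i, ∑ j, π i * X i j * (u i - u j) ^ 2 := ⟨_, rfl⟩
  have hterm : ∀ i j, x i * (W i j * x j) =
      (if i = j then π i * u i ^ 2 else 0) - π i * X i j * (u i * u j)
        + (π i * u i) * (π j * u j) := by
    intro i j
    rw [hW i j]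
    rcases eq_or_ne i j with rfl | h
    · simp only [eq_self_iff_true, if_true]
      rw [hxu i, ← hss i]
      linear_combination (-(s i ^ 2 * X i i * u i ^ 2)) * hinv i
    · simp only [if_neg h]
      rw [hxu i, hxu j, ← hss i, ← hss j]
      linear_combination (-(s i ^ 2 * X i j * (u i * u j))) * hinv j
  have h1 : ∑ i : Fin n, ∑ j : Fin n, (if i = j then π i * u i ^ 2 else 0) = A := by
    rw [hA_def]
    exact Finset.sum_congr rfl fun i _ => by rw [Finset.sum_ite_eq]; simp
  have h3 : ∑ i : Fin n, ∑ j : Fin n, (π i * u i) * (π j * u j) = C ^ 2 := by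
    rw [hC_def, sq, Finset.sum_mul_sum]
  have hform : x ⬝ᵥ W *ᵥ x = A - B + C ^ 2 := by
    simp only [Matrix.mulVec, dotProduct, Finset.mul_sum]
    rw [Finset.sum_congr rfl fun i _ => Finset.sum_congr rfl fun j _ => hterm i j]
    simp only [Finset.sum_add_distrib, Finset.sum_sub_distrib]
    rw [h1, h3, hB_def]
  have hDA : D = 2 * A - 2 * B := by
    have expand : ∀ i j, π i * X i j * (u i - u j) ^ 2 =
        π i * X i j * u i ^ 2 + π i * X i j * u j ^ 2 - 2 * (π i * X i j * (u i * u j)) := by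
      intro i j; ring
    have hA1 : ∑ i : Fin n, ∑ j : Fin n, π i * X i j * u i ^ 2 = A := by
      rw [hA_def]
      refine Finset.sum_congr rfl fun i _ => ?_
      rw [show ∑ j : Fin n, π i * X i j * u i ^ 2 = (π i * u i ^ 2) * ∑ j, X i j by
        rw [Finset.mul_sum]; exact Finset.sum_congr rfl fun j _ => by ring]
      rw [hXrow, mul_one]
    have hA2 : ∑ i : Fin n, ∑ j : Fin n, π i * X i j * u j ^ 2 = A := by
      rw [Finset.sum_comm, hA_def]
      refine Finset.sum_congr rfl fun j _ => ?_
      rw [show ∑ i : Fin n, π i * X i j * u j ^ 2 = (∑ i, π i * X i j) * u j ^ 2 by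
        rw [Finset.sum_mul]]
      rw [hcol]
    rw [hD_def]
    rw [Finset.sum_congr rfl fun i _ => Finset.sum_congr rfl fun j _ => expand i j]
    simp only [Finset.sum_add_distrib, Finset.sum_sub_distrib, ← Finset.mul_sum]
    rw [hA1, hA2, hB_def]
    ring
  have hDnn : 0 ≤ D := by
    rw [hD_def]
    refine Finset.sum_nonneg fun i _ => Finset.sum_nonneg fun j _ => ?_
    exact mul_nonneg (mul_nonneg (hπpos i).le (hXnn i j)) (sq_nonneg _)
  have hform2 : x ⬝ᵥ W *ᵥ x = D / 2 + C ^ 2 := by rw [hform, hDA]; ring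
  rw [hform2]
  by_contra hle
  push_neg at hle
  have hD0 : D = 0 := le_antisymm (by nlinarith [sq_nonneg C]) hDnn
  have hC0 : C = 0 := by nlinarith [sq_nonneg C]
  rw [hD_def] at hD0
  have hzero : ∀ i j, π i * X i j * (u i - u j) ^ 2 = 0 := by
    intro i j
    have hnn : ∀ i j, (0:ℝ) ≤ π i * X i j * (u i - u j) ^ 2 := fun i j =>
      mul_nonneg (mul_nonneg (hπpos i).le (hXnn i j)) (sq_nonneg _)
    have h1 := (Finset.sum_eq_zero_iff_of_nonneg fun i _ =>
      Finset.sum_nonneg fun j _ => hnn i j).1 hD0 i (Finset.mem_univ i)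
    exact (Finset.sum_eq_zero_iff_of_nonneg fun j _ => hnn i j).1 h1 j (Finset.mem_univ j)
  have hstep : ∀ i j, 0 < X i j → u i = u j := by
    intro i j hij
    have hpx : π i * X i j ≠ 0 := ne_of_gt (mul_pos (hπpos i) hij)
    have h2 : (u i - u j) ^ 2 = 0 := by
      rcases mul_eq_zero.1 (hzero i j) with h' | h'
      · exact absurd h' hpx
      · exact h'
    have h3 := pow_eq_zero_iff (n := 2) (by norm_num) |>.1 h2
    linarith [sub_eq_zero.1 h3]
  have hconst : ∀ i j, u i = u j := by
    intro i j
    obtain ⟨k, hk⟩ := hirr i j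
    exact pow_entry_prop X hXnn u hstep k i j hk
  obtain ⟨i0, hi0⟩ := Function.ne_iff.1 hx
  have hCval : C = u i0 := by
    rw [hC_def, Finset.sum_congr rfl fun i _ => by rw [hconst i i0],
      ← Finset.sum_mul, hπsum, one_mul]
  have hu0 : u i0 = 0 := by rw [← hCval, hC0]
  exact hi0 (by rw [hxu i0, hu0, mul_zero]; rfl)
end

section
/- Let f: ℝ^{n×n} → ℝ be defined by f(X) = tr((I - X + π̂π̂ᵀ)^{-1}) + (1/2)‖D_{π̂}^{-1} X D_{π̂} - P‖_F² on the open set where I - X + π̂π̂ᵀ is invertible. Then the (Euclidean) gradient of f at X is Grad f(X) = D_π^{-1} X D_π - D_{π̂}^{-1} P D_{π̂} + ((I - X + π̂π̂ᵀ)²)^{-T}, where π = π̂² entrywise. -/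
open Matrix BigOperators

attribute [local instance] Matrix.linftyOpNormedRing Matrix.linftyOpNormedAlgebra

theorem euclidean_gradient_formula {n : ℕ}
    (X P : Matrix (Fin n) (Fin n) ℝ) (p : Fin n → ℝ)
    (hp : ∀ i, 0 < p i)
    (hM : IsUnit (1 - X + Matrix.vecMulVec p p)) :
    ∀ V : Matrix (Fin n) (Fin n) ℝ,
      HasDerivAt (fun t : ℝ =>
          Matrix.trace ((1 - (X + t • V) + Matrix.vecMulVec p p)⁻¹)
          + (1 / 2) * ∑ i, ∑ j,
              ((p i)⁻¹ * ((X + t • V : Matrix (Fin n) (Fin n) ℝ) i j) * p j - P i j) ^ 2)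
        (∑ i, ∑ j, V i j *
          ((Matrix.diagonal (fun i => (p i ^ 2)⁻¹) * X * Matrix.diagonal (fun i => p i ^ 2)
            - Matrix.diagonal (fun i => (p i)⁻¹) * P * Matrix.diagonal p
            + (((1 - X + Matrix.vecMulVec p p) ^ 2)⁻¹)ᵀ : Matrix (Fin n) (Fin n) ℝ) i j)) 0 := by
  intro V
  set A : Matrix (Fin n) (Fin n) ℝ := 1 - X + Matrix.vecMulVec p p with hA
  obtain ⟨u, hu⟩ := hM
  -- the curve t ↦ A - t • V
  have hcurve : HasDerivAt
      (fun t : ℝ => (1 - (X + t • V) + Matrix.vecMulVec p p : Matrix (Fin n) (Fin n) ℝ))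
      (-V) 0 := by
    have h1 : HasDerivAt (fun t : ℝ => t • V) ((1:ℝ) • V) 0 := (hasDerivAt_id 0).smul_const V
    have h2 : HasDerivAt
        (fun t : ℝ => (1 - (X + t • V) + Matrix.vecMulVec p p : Matrix (Fin n) (Fin n) ℝ))
        (-((1:ℝ) • V)) 0 := ((h1.const_add X).const_sub 1).add_const (Matrix.vecMulVec p p)
    simpa using h2
  -- derivative of the inverse
  have hinv : HasDerivAt
      (fun t : ℝ => ((1 - (X + t • V) + Matrix.vecMulVec p p : Matrix (Fin n) (Fin n) ℝ))⁻¹)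
      (A⁻¹ * V * A⁻¹) 0 := by
    have h0 : (fun t : ℝ =>
        (1 - (X + t • V) + Matrix.vecMulVec p p : Matrix (Fin n) (Fin n) ℝ)) 0 = (↑u) := by
      simp [hu, hA]
    have hf : HasFDerivAt Ring.inverse
        (-(ContinuousLinearMap.mulLeftRight ℝ (Matrix (Fin n) (Fin n) ℝ) ↑u⁻¹ ↑u⁻¹))
        ((fun t : ℝ =>
          (1 - (X + t • V) + Matrix.vecMulVec p p : Matrix (Fin n) (Fin n) ℝ)) 0) := by
      rw [h0]; exact hasFDerivAt_ringInverse u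
    have hcomp := hf.comp_hasDerivAt 0 hcurve
    have heq : (Ring.inverse ∘ fun t : ℝ =>
        (1 - (X + t • V) + Matrix.vecMulVec p p : Matrix (Fin n) (Fin n) ℝ)) =
        fun t : ℝ =>
          ((1 - (X + t • V) + Matrix.vecMulVec p p : Matrix (Fin n) (Fin n) ℝ))⁻¹ := by
      funext t
      simp [Function.comp, Matrix.nonsing_inv_eq_ringInverse]
    rw [heq] at hcomp
    have hval : (-(ContinuousLinearMap.mulLeftRight ℝ (Matrix (Fin n) (Fin n) ℝ) ↑u⁻¹ ↑u⁻¹)) (-V)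
        = A⁻¹ * V * A⁻¹ := by
      simp [ContinuousLinearMap.mulLeftRight_apply, Matrix.coe_units_inv, hu]
    rwa [hval] at hcomp
  -- derivative of the trace term
  have htr : HasDerivAt
      (fun t : ℝ =>
        Matrix.trace ((1 - (X + t • V) + Matrix.vecMulVec p p : Matrix (Fin n) (Fin n) ℝ))⁻¹)
      (Matrix.trace (A⁻¹ * V * A⁻¹)) 0 := by
    have := ((Matrix.traceLinearMap (Fin n) ℝ ℝ).toContinuousLinearMap).hasFDerivAt.comp_hasDerivAt 0 hinv
    exact this
  -- derivative of the quadratic term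
  have h2 : HasDerivAt
      (fun t : ℝ => (1 / 2 : ℝ) * ∑ i, ∑ j,
        ((p i)⁻¹ * ((X + t • V : Matrix (Fin n) (Fin n) ℝ) i j) * p j - P i j) ^ 2)
      ((1 / 2 : ℝ) * ∑ i, ∑ j,
        2 * ((p i)⁻¹ * X i j * p j - P i j) * ((p i)⁻¹ * V i j * p j)) 0 := by
    refine HasDerivAt.const_mul _ ?_
    refine HasDerivAt.fun_sum fun i _ => HasDerivAt.fun_sum fun j _ => ?_
    have hij : HasDerivAt
        (fun t : ℝ => (p i)⁻¹ * ((X + t • V : Matrix (Fin n) (Fin n) ℝ) i j) * p j - P i j)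
        ((p i)⁻¹ * V i j * p j) 0 := by
      have hb : HasDerivAt
          (fun t : ℝ => (p i)⁻¹ * X i j * p j - P i j + t * ((p i)⁻¹ * V i j * p j))
          ((p i)⁻¹ * V i j * p j) 0 := by
        simpa using (hasDerivAt_mul_const ((p i)⁻¹ * V i j * p j)).const_add
          ((p i)⁻¹ * X i j * p j - P i j)
      have heq : (fun t : ℝ =>
          (p i)⁻¹ * ((X + t • V : Matrix (Fin n) (Fin n) ℝ) i j) * p j - P i j) =
          fun t : ℝ => (p i)⁻¹ * X i j * p j - P i j + t * ((p i)⁻¹ * V i j * p j) := by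
        funext t
        simp only [Matrix.add_apply, Matrix.smul_apply, smul_eq_mul]
        ring
      rw [heq]; exact hb
    have := hij.fun_pow 2
    convert this using 1
    · rfl
    simp only [Matrix.add_apply, Matrix.smul_apply, smul_eq_mul, zero_mul, add_zero, pow_one,
      Nat.cast_ofNat]
    norm_num
  have htotal := htr.add h2
  convert htotal using 1
  · rfl
  · rfl
  · rfl
  have hsq : ((A ^ 2)⁻¹ : Matrix (Fin n) (Fin n) ℝ) = A⁻¹ * A⁻¹ := by
    rw [pow_two, Matrix.mul_inv_rev]
  have htrace : Matrix.trace (A⁻¹ * V * A⁻¹) = ∑ i, ∑ j, V i j * (((A ^ 2)⁻¹)ᵀ) i j := by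
    rw [Matrix.trace_mul_cycle, Matrix.trace_mul_comm, ← hsq]
    simp only [Matrix.trace, Matrix.diag, Matrix.mul_apply, Matrix.transpose_apply]
  rw [htrace, Finset.mul_sum, ← Finset.sum_add_distrib]
  refine Finset.sum_congr rfl fun i _ => ?_
  rw [Finset.mul_sum, ← Finset.sum_add_distrib]
  refine Finset.sum_congr rfl fun j _ => ?_
  have hpi := (hp i).ne'
  have hpj := (hp j).ne'
  simp only [Matrix.add_apply, Matrix.sub_apply, Matrix.mul_diagonal, Matrix.diagonal_mul,
    Matrix.transpose_apply]
  field_simp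
  ring
end

section
/- Let X ∈ M (symmetric, supported on symmetric pattern S, with X π̂ = π̂ and X_{ij} > 0 on S), and for α ∈ ℝ^n set Z_α = (α π̂ᵀ + π̂ αᵀ) ⊙ (X ⊙ S), where ⊙ is the entrywise product and S is identified with its 0/1 indicator matrix. Then for every tangent vector ξ (symmetric, supported on S, ξπ̂ = 0), the inner product ⟨ξ, Z_α⟩_X = Σ_{X_{ij}≠0} ξ_{ij} (Z_α)_{ij}/X_{ij} equals zero; i.e., every Z_α is orthogonal to the tangent space with respect to the modified Fisher metric. -/
open Matrix BigOperators

theorem normal_directions_orthogonal_to_tangent {n : ℕ}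
    (S : Fin n → Fin n → Prop) [∀ i j, Decidable (S i j)]
    (hSsym : ∀ i j, S i j → S j i) (hSdiag : ∀ i, S i i)
    (p : Fin n → ℝ) (hp : ∀ i, 0 < p i)
    (X : Matrix (Fin n) (Fin n) ℝ)
    (hXsym : X.IsSymm) (hXp : X.mulVec p = p)
    (hXpos : ∀ i j, S i j → 0 < X i j) (hXzero : ∀ i j, ¬ S i j → X i j = 0)
    (α : Fin n → ℝ)
    (ξ : Matrix (Fin n) (Fin n) ℝ)
    (hξsym : ξ.IsSymm) (hξS : ∀ i j, ¬ S i j → ξ i j = 0) (hξp : ξ.mulVec p = 0) :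
    ∑ i, ∑ j, ξ i j *
      ((α i * p j + p i * α j) * (X i j * (if S i j then (1 : ℝ) else 0))) / X i j = 0 := by
  have key : ∀ i j, ξ i j *
      ((α i * p j + p i * α j) * (X i j * (if S i j then (1 : ℝ) else 0))) / X i j
      = ξ i j * (α i * p j) + ξ i j * (p i * α j) := by
    intro i j
    by_cases h : S i j
    · have hx := (hXpos i j h).ne'
      simp [h]
      field_simp
    · simp [h, hξS i j h]
  simp only [key]
  simp only [Finset.sum_add_distrib]
  have h1 : ∀ j, ∑ i, ξ i j * p i = 0 := by
    intro j
    have := congrFun hξp j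
    simp only [Matrix.mulVec, dotProduct, Pi.zero_apply] at this
    rw [← this]
    apply Finset.sum_congr rfl
    intro i _
    rw [← hξsym.apply i j]
  have h2 : ∀ i, ∑ j, ξ i j * p j = 0 := by
    intro i
    have := congrFun hξp i
    simpa [Matrix.mulVec, dotProduct] using this
  have e1 : ∑ i, ∑ j, ξ i j * (α i * p j) = 0 := by
    apply Finset.sum_eq_zero
    intro i _
    have : ∑ j, ξ i j * (α i * p j) = α i * ∑ j, ξ i j * p j := by
      rw [Finset.mul_sum]; apply Finset.sum_congr rfl; intro j _; ring
    rw [this, h2 i, mul_zero]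
  have e2 : ∑ i, ∑ j, ξ i j * (p i * α j) = 0 := by
    rw [Finset.sum_comm]
    apply Finset.sum_eq_zero
    intro j _
    have : ∑ i, ξ i j * (p i * α j) = α j * ∑ i, ξ i j * p i := by
      rw [Finset.mul_sum]; apply Finset.sum_congr rfl; intro i _; ring
    rw [this, h1 j, mul_zero]
  rw [e1, e2, add_zero]
end

section
/- Suppose P is an irreducible stochastic matrix of order n with stationary distribution π whose entries are ordered π_1 ≤ π_2 ≤ ⋯ ≤ π_n, and suppose the leading (n-1)×(n-1) principal submatrix P_{n-1} is nilpotent and π_{n-1}ᵀ(I - P_{n-1})^{-1} 1 = Σ_{j=1}^n (n-j) π_j, where π_{n-1} is the leading (n-1)-subvector of π. Then Kemeny's constant satisfies K(P) = Σ_{j=1}^n (j-1) π_j. -/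
open Matrix BigOperators

section KirklandAux

variable {m : Type*} [Fintype m] [DecidableEq m]

lemma kirk_mul_vecMulVec (A : Matrix m m ℝ) (x y : m → ℝ) :
    A * Matrix.vecMulVec x y = Matrix.vecMulVec (A.mulVec x) y := by
  ext i j
  simp [Matrix.mul_apply, Matrix.vecMulVec_apply, Matrix.mulVec, dotProduct,
    Finset.sum_mul, mul_assoc]

lemma kirk_vecMulVec_mul (A : Matrix m m ℝ) (x y : m → ℝ) :
    Matrix.vecMulVec x y * A = Matrix.vecMulVec x (Matrix.vecMul y A) := by
  ext i j
  simp [Matrix.mul_apply, Matrix.vecMulVec_apply, Matrix.vecMul, dotProduct,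
    Finset.mul_sum, mul_assoc]

lemma kirk_trace_vecMulVec (x y : m → ℝ) :
    Matrix.trace (Matrix.vecMulVec x y) = dotProduct x y := by
  simp [Matrix.trace, Matrix.vecMulVec_apply, dotProduct, Matrix.diag]

lemma kirk_vecMulVec_sub_left (x w y : m → ℝ) :
    Matrix.vecMulVec (x - w) y = Matrix.vecMulVec x y - Matrix.vecMulVec w y := by
  ext i j; simp [Matrix.vecMulVec_apply, sub_mul]

lemma kirk_vecMulVec_smul_left (c : ℝ) (x y : m → ℝ) :
    Matrix.vecMulVec (c • x) y = c • Matrix.vecMulVec x y := by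
  ext i j; simp [Matrix.vecMulVec_apply, mul_assoc]

lemma kirk_vecMul_vecMulVec (y x z : m → ℝ) :
    Matrix.vecMul y (Matrix.vecMulVec x z) = dotProduct y x • z := by
  ext j
  simp [Matrix.vecMul, Matrix.vecMulVec_apply, dotProduct, Finset.sum_mul, mul_assoc]

lemma kirk_vecMul_smul_right (y : m → ℝ) (c : ℝ) (A : Matrix m m ℝ) :
    Matrix.vecMul y (c • A) = c • Matrix.vecMul y A := by
  ext j
  simp [Matrix.vecMul, dotProduct, Finset.mul_sum, mul_assoc, mul_comm, mul_left_comm]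

lemma kirk_vecMulVec_mulVec (x z w : m → ℝ) :
    (Matrix.vecMulVec x z).mulVec w = dotProduct z w • x := by
  ext i
  simp [Matrix.mulVec, Matrix.vecMulVec_apply, dotProduct, Finset.mul_sum,
    mul_assoc, mul_comm, mul_left_comm]

end KirklandAux

theorem kirkland_equality_case {n : ℕ}
    (P : Matrix (Fin (n + 1)) (Fin (n + 1)) ℝ) (π : Fin (n + 1) → ℝ)
    (hPnn : ∀ i j, 0 ≤ P i j) (hProw : ∀ i, ∑ j, P i j = 1)
    (hirr : ∀ i j, ∃ k, 0 < (P ^ k) i j)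
    (hπnn : ∀ i, 0 ≤ π i) (hπsum : ∑ i, π i = 1)
    (hstat : Matrix.vecMul π P = π)
    (hmono : ∀ i j : Fin (n + 1), i ≤ j → π i ≤ π j)
    (hnil : IsNilpotent (Matrix.of fun (i j : Fin n) => P i.castSucc j.castSucc))
    (hsum : dotProduct (fun i : Fin n => π i.castSucc)
        (((1 - Matrix.of fun (i j : Fin n) => P i.castSucc j.castSucc)⁻¹).mulVec
          (fun _ => 1)) =
      ∑ j : Fin (n + 1), ((n : ℝ) - (j : ℕ)) * π j) :
    Matrix.trace ((1 - P + Matrix.vecMulVec (fun _ => 1) π)⁻¹) - 1 =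
      ∑ j : Fin (n + 1), ((j : ℕ) : ℝ) * π j := by
  classical
  set Q : Matrix (Fin n) (Fin n) ℝ :=
    Matrix.of fun (i j : Fin n) => P i.castSucc j.castSucc with hQdef
  set N : Matrix (Fin n) (Fin n) ℝ := (1 - Q)⁻¹ with hNdef
  have hUnit : IsUnit (1 - Q) := hnil.isUnit_one_sub
  have hUdet : IsUnit (1 - Q).det := (Matrix.isUnit_iff_isUnit_det _).mp hUnit
  have hUN : (1 - Q) * N = 1 := Matrix.mul_nonsing_inv _ hUdet
  -- positivity of last entry of π
  have hπlast : 0 < π (Fin.last n) := by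
    rcases lt_or_eq_of_le (hπnn (Fin.last n)) with h | h
    · exact h
    · exfalso
      have hz : ∀ i, π i = 0 := fun i =>
        le_antisymm (by rw [← h.symm] at *; exact le_trans (hmono i (Fin.last n) (Fin.le_last i)) (le_of_eq h.symm)) (hπnn i)
      rw [Finset.sum_congr rfl (fun i _ => hz i)] at hπsum
      simp at hπsum
  have hπl : π (Fin.last n) ≠ 0 := ne_of_gt hπlast
  -- vectors
  set u : Fin (n + 1) → ℝ := fun _ => 1 with hu
  set e : Fin (n + 1) → ℝ := fun i => if i = Fin.last n then 1 else 0 with he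
  set σ : Fin n → ℝ := fun i => π i.castSucc with hσdef
  set c : Fin n → ℝ := fun j => P (Fin.last n) j.castSucc with hcdef
  -- the embedded matrix M
  set M : Matrix (Fin (n + 1)) (Fin (n + 1)) ℝ :=
    Matrix.of fun i j =>
      if hi : i ≠ Fin.last n then
        if hj : j ≠ Fin.last n then N (i.castPred hi) (j.castPred hj) else 0
      else 0 with hMdef
  have hMcc : ∀ i j : Fin n, M i.castSucc j.castSucc = N i j := by
    intro i j
    simp [hMdef, (Fin.castSucc_lt_last i).ne, (Fin.castSucc_lt_last j).ne]
  have hMlastrow : ∀ j, M (Fin.last n) j = 0 := by intro j; simp [hMdef]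
  have hMlastcol : ∀ i, M i (Fin.last n) = 0 := by
    intro i; by_cases hi : i = Fin.last n <;> simp [hMdef, hi]
  -- stationarity restricted
  have hstatc : Matrix.vecMul σ (1 - Q) = π (Fin.last n) • c := by
    ext j
    have hj := congrFun hstat j.castSucc
    simp only [Matrix.vecMul, dotProduct] at hj
    rw [Fin.sum_univ_castSucc] at hj
    simp only [Matrix.vecMul, dotProduct, Matrix.sub_apply, Matrix.one_apply, hQdef,
      Matrix.of_apply, Pi.smul_apply, smul_eq_mul, hσdef, hcdef]
    have hkey : ∑ k : Fin n, π k.castSucc * ((if k = j then (1:ℝ) else 0) - P k.castSucc j.castSucc)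
        = π j.castSucc - ∑ k : Fin n, π k.castSucc * P k.castSucc j.castSucc := by
      rw [Finset.sum_congr rfl (fun k _ => mul_sub (π k.castSucc) _ _), Finset.sum_sub_distrib]
      congr 1
      simp [mul_ite]
    rw [hkey]
    linarith [hj]
  have hσN : ∀ j, σ j = π (Fin.last n) * Matrix.vecMul c N j := by
    have h1 := congrArg (fun v => Matrix.vecMul v N) hstatc
    simp only [Matrix.vecMul_vecMul, hUN, Matrix.vecMul_one] at h1
    intro j
    have := congrFun h1 j
    simpa [Matrix.smul_vecMul] using this
  -- key relation R1
  have R1 : (1 - P) * M = 1 - (π (Fin.last n))⁻¹ • Matrix.vecMulVec e π := by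
    ext i j
    simp only [Matrix.mul_apply, Matrix.sub_apply, Matrix.smul_apply, Matrix.one_apply,
      Matrix.vecMulVec_apply, smul_eq_mul]
    rcases eq_or_ne j (Fin.last n) with hj | hj
    · subst hj
      rw [Finset.sum_eq_zero (fun k _ => by rw [hMlastcol k, mul_zero])]
      rcases eq_or_ne i (Fin.last n) with hi | hi
      · subst hi
        simp [he, inv_mul_cancel₀ hπl]
      · simp [he, hi]
    · obtain ⟨j', rfl⟩ : ∃ j', j = j'.castSucc :=
        ⟨j.castPred hj, (Fin.castSucc_castPred j hj).symm⟩
      rw [Fin.sum_univ_castSucc, hMlastrow, mul_zero, add_zero]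
      rcases eq_or_ne i (Fin.last n) with hi | hi
      · subst hi
        have hsum' : ∑ k : Fin n, ((if Fin.last n = k.castSucc then (1:ℝ) else 0)
            - P (Fin.last n) k.castSucc) * M k.castSucc j'.castSucc
            = -(Matrix.vecMul c N j') := by
          have hv : Matrix.vecMul c N j' = ∑ k : Fin n, c k * N k j' := by
            simp [Matrix.vecMul, dotProduct]
          rw [hv, ← Finset.sum_neg_distrib]
          refine Finset.sum_congr rfl fun k _ => ?_
          rw [hMcc, if_neg (Fin.castSucc_lt_last k).ne']
          simp only [hcdef]
          ring
        rw [hsum']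
        rw [if_neg (Fin.castSucc_lt_last j').ne']
        have hπj : π j'.castSucc = π (Fin.last n) * Matrix.vecMul c N j' := hσN j'
        simp only [he, if_pos rfl]
        rw [hπj]
        field_simp
        ring
      · obtain ⟨i', rfl⟩ : ∃ i', i = i'.castSucc :=
          ⟨i.castPred hi, (Fin.castSucc_castPred i hi).symm⟩
        have : ∑ k : Fin n, ((if i'.castSucc = k.castSucc then (1:ℝ) else 0)
            - P i'.castSucc k.castSucc) * M k.castSucc j'.castSucc
            = ((1 - Q) * N) i' j' := by
          rw [Matrix.mul_apply]
          refine Finset.sum_congr rfl fun k _ => ?_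
          rw [hMcc]
          simp [Fin.castSucc_inj, Matrix.one_apply, hQdef]
        rw [this, hUN]
        simp [Matrix.one_apply, Fin.castSucc_inj, he, (Fin.castSucc_lt_last i').ne]
  -- row sums
  have hPu : P.mulVec u = u := by
    ext i; simp [Matrix.mulVec, dotProduct, hu, hProw i]
  have h1Pu : (1 - P).mulVec u = 0 := by
    rw [Matrix.sub_mulVec, Matrix.one_mulVec, hPu, sub_self]
  have hπu : dotProduct π u = 1 := by
    simp [dotProduct, hu, hπsum]
  have heπ : dotProduct π e = π (Fin.last n) := by
    simp [dotProduct, he, mul_comm]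
  -- α
  set α : ℝ := dotProduct π (M.mulVec u) with hαdef
  -- Z
  set Z : Matrix (Fin (n + 1)) (Fin (n + 1)) ℝ :=
    M - Matrix.vecMulVec (M.mulVec u) π + (α + 1) • Matrix.vecMulVec u π
      - Matrix.vecMulVec u (Matrix.vecMul π M) with hZdef
  -- A * Z = 1
  have hmulvec : (1 - P).mulVec (M.mulVec u) = u - (π (Fin.last n))⁻¹ • e := by
    rw [Matrix.mulVec_mulVec, R1, Matrix.sub_mulVec, Matrix.one_mulVec,
      Matrix.smul_mulVec, kirk_vecMulVec_mulVec, hπu, one_smul]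
  have e2 : (1 - P) * Matrix.vecMulVec (M.mulVec u) π
      = Matrix.vecMulVec u π - (π (Fin.last n))⁻¹ • Matrix.vecMulVec e π := by
    rw [kirk_mul_vecMulVec, hmulvec, kirk_vecMulVec_sub_left, kirk_vecMulVec_smul_left]
  have e3 : (1 - P) * ((α + 1) • Matrix.vecMulVec u π) = 0 := by
    rw [Matrix.mul_smul, kirk_mul_vecMulVec, h1Pu]
    ext i j; simp [Matrix.vecMulVec_apply]
  have e4 : (1 - P) * Matrix.vecMulVec u (Matrix.vecMul π M) = 0 := by
    rw [kirk_mul_vecMulVec, h1Pu]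
    ext i j; simp [Matrix.vecMulVec_apply]
  have e5 : Matrix.vecMul π Z = π := by
    rw [hZdef]
    simp only [Matrix.vecMul_sub, Matrix.vecMul_add, kirk_vecMul_smul_right,
      kirk_vecMul_vecMulVec, hπu, ← hαdef]
    ext j
    simp only [Pi.sub_apply, Pi.add_apply, Pi.smul_apply, smul_eq_mul, one_smul]
    ring
  have hAZ : (1 - P + Matrix.vecMulVec u π) * Z = 1 := by
    rw [add_mul]
    have hZmul : (1 - P) * Z = 1 - Matrix.vecMulVec u π := by
      rw [hZdef, mul_sub, mul_add, mul_sub, R1, e2, e3, e4]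
      ext i j
      simp only [Matrix.sub_apply, Matrix.add_apply, Matrix.smul_apply, Matrix.zero_apply,
        Matrix.vecMulVec_apply, smul_eq_mul]
      ring
    rw [hZmul, kirk_vecMulVec_mul, e5]
    ext i j
    simp only [Matrix.sub_apply, Matrix.add_apply, Matrix.vecMulVec_apply]
    ring
  have hAinv : (1 - P + Matrix.vecMulVec u π)⁻¹ = Z := Matrix.inv_eq_right_inv hAZ
  -- trace of N
  have htrN : Matrix.trace N = n := by
    obtain ⟨k, hk⟩ := hnil
    have hgeo : (∑ i ∈ Finset.range (k + 1), Q ^ i) * (1 - Q) = 1 := by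
      have h := geom_sum_mul Q (k + 1)
      have hQk1 : Q ^ (k + 1) = 0 := by rw [pow_succ, hk, zero_mul]
      rw [hQk1, zero_sub] at h
      calc (∑ i ∈ Finset.range (k + 1), Q ^ i) * (1 - Q)
          = -((∑ i ∈ Finset.range (k + 1), Q ^ i) * (Q - 1)) := by noncomm_ring
        _ = -(-1) := by rw [h]
        _ = 1 := neg_neg 1
    have hNeq : N = ∑ i ∈ Finset.range (k + 1), Q ^ i := Matrix.inv_eq_left_inv hgeo
    rw [hNeq, Matrix.trace_sum, Finset.sum_range_succ']
    have hzero : ∀ i ∈ Finset.range k, Matrix.trace (Q ^ (i + 1)) = 0 := by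
      intro i _
      have hnil' : IsNilpotent (Q ^ (i + 1)) := by
        refine ⟨k, ?_⟩
        rw [← pow_mul]
        exact pow_eq_zero_of_le (Nat.le_mul_of_pos_left k (Nat.succ_pos i)) hk
      exact (Matrix.isNilpotent_trace_of_isNilpotent hnil').eq_zero
    rw [Finset.sum_eq_zero hzero, zero_add, pow_zero, Matrix.trace_one]
    simp
  -- trace of M
  have htrM : Matrix.trace M = n := by
    rw [Matrix.trace]
    rw [Fin.sum_univ_castSucc]
    simp only [Matrix.diag_apply]
    rw [hMlastrow, add_zero]
    rw [show ∑ i : Fin n, M i.castSucc i.castSucc = Matrix.trace N from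
      Finset.sum_congr rfl (fun i _ => hMcc i i)]
    exact htrN
  -- α in terms of hsum
  have hMu : ∀ i : Fin n, M.mulVec u i.castSucc = N.mulVec (fun _ => 1) i := by
    intro i
    simp only [Matrix.mulVec, dotProduct, hu]
    rw [Fin.sum_univ_castSucc, hMlastcol, zero_mul, add_zero]
    exact Finset.sum_congr rfl fun k _ => by rw [hMcc]
  have hMulast : M.mulVec u (Fin.last n) = 0 := by
    simp only [Matrix.mulVec, dotProduct]
    exact Finset.sum_eq_zero fun k _ => by rw [hMlastrow, zero_mul]
  have hαval : α = ∑ j : Fin (n + 1), ((n : ℝ) - (j : ℕ)) * π j := by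
    rw [hαdef, ← hsum]
    simp only [dotProduct]
    rw [Fin.sum_univ_castSucc, hMulast, mul_zero, add_zero]
    exact Finset.sum_congr rfl fun i _ => by rw [hMu i]
  have hαval2 : α = (n : ℝ) - ∑ j : Fin (n + 1), ((j : ℕ) : ℝ) * π j := by
    rw [hαval]
    have : ∑ j : Fin (n + 1), ((n : ℝ) - (j : ℕ)) * π j
        = (n : ℝ) * ∑ j : Fin (n + 1), π j - ∑ j : Fin (n + 1), ((j : ℕ) : ℝ) * π j := by
      rw [Finset.mul_sum, ← Finset.sum_sub_distrib]
      exact Finset.sum_congr rfl fun j _ => by ring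
    rw [this, hπsum, mul_one]
  -- trace of Z
  have htrZ : Matrix.trace Z = (n : ℝ) + 1 - α := by
    rw [hZdef, Matrix.trace_sub, Matrix.trace_add, Matrix.trace_sub, Matrix.trace_smul,
      kirk_trace_vecMulVec, kirk_trace_vecMulVec, kirk_trace_vecMulVec]
    have t1 : dotProduct (M.mulVec u) π = α := by
      rw [hαdef, dotProduct_comm]
    have t2 : dotProduct u π = 1 := by rw [dotProduct_comm, hπu]
    have t3 : dotProduct u (Matrix.vecMul π M) = α := by
      rw [dotProduct_comm, ← dotProduct_mulVec, hαdef]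
    rw [t1, t2, t3, htrM]
    simp
    ring
  rw [hAinv, htrZ, hαval2]
  ring
end

section
/- Let P be a reversible stochastic matrix with positive stationary distribution π and let π̂ = π^{1/2}. If the eigenvalues of P are -1 ≤ λ_1 ≤ ⋯ ≤ λ_{n-1} < λ_n = 1 (real by reversibility, with λ_n = 1 simple by irreducibility), then Kemeny's constant satisfies K(P) = tr((I - P + 1πᵀ)^{-1}) - 1 = Σ_{i=1}^{n-1} 1/(1 - λ_i). -/
open Matrix BigOperators Polynomial

lemma kem_eval_charpoly {m : Type*} [Fintype m] [DecidableEq m] (M : Matrix m m ℝ) (x : ℝ) :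
    M.charpoly.eval x = (x • (1 : Matrix m m ℝ) - M).det := by
  rw [Matrix.charpoly, ← Polynomial.coe_evalRingHom, RingHom.map_det]
  congr 1
  ext i j
  by_cases h : i = j
  · subst h
    simp [Matrix.charmatrix_apply_eq, Matrix.sub_apply, Matrix.smul_apply, Matrix.one_apply]
  · simp [Matrix.charmatrix_apply_ne _ _ _ h, Matrix.sub_apply, Matrix.smul_apply,
      Matrix.one_apply, h]

lemma kem_det_smul_one_sub_vecMulVec {m : Type*} [Fintype m] [DecidableEq m]
    (w v : m → ℝ) {y : ℝ} (hy : y ≠ 0) :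
    (y • (1 : Matrix m m ℝ) - Matrix.vecMulVec w v).det
      = y ^ Fintype.card m * (1 - y⁻¹ * (v ⬝ᵥ w)) := by
  have h1 : y • (1 : Matrix m m ℝ) - Matrix.vecMulVec w v
      = y • (1 + Matrix.replicateCol Unit ((-y⁻¹) • w) * Matrix.replicateRow Unit v) := by
    rw [← Matrix.vecMulVec_eq]
    ext i j
    simp [Matrix.vecMulVec_apply, Matrix.one_apply, mul_add, smul_smul]
    field_simp
    ring
  rw [h1, Matrix.det_smul, Matrix.det_one_add_replicateCol_mul_replicateRow, dotProduct_smul]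
  rw [smul_eq_mul]
  ring

lemma kem_prod_neg {m : Type*} [Fintype m] (f : m → ℝ) :
    ∏ i : m, (-(f i)) = (-1) ^ Fintype.card m * ∏ i : m, f i := by
  rw [Finset.prod_congr rfl (fun i _ => (neg_eq_neg_one_mul (f i) : -(f i) = (-1) * f i)),
    Finset.prod_mul_distrib, Finset.prod_const, Finset.card_univ]


theorem kemeny_eigenvalue_formula {n : ℕ}
    (P : Matrix (Fin (n + 1)) (Fin (n + 1)) ℝ) (π : Fin (n + 1) → ℝ)
    (hPnn : ∀ i j, 0 ≤ P i j) (hProw : ∀ i, ∑ j, P i j = 1)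
    (hirr : ∀ i j, ∃ k, 0 < (P ^ k) i j)
    (hπpos : ∀ i, 0 < π i) (hπsum : ∑ i, π i = 1)
    (hstat : Matrix.vecMul π P = π)
    (hrev : ∀ i j, π i * P i j = π j * P j i)
    (lam : Fin (n + 1) → ℝ)
    (hmono : Monotone lam)
    (hlo : ∀ i, -1 ≤ lam i)
    (htop : lam (Fin.last n) = 1)
    (hlt : ∀ i : Fin (n + 1), i < Fin.last n → lam i < 1)
    (hchar : P.charpoly = ∏ i : Fin (n + 1), (Polynomial.X - Polynomial.C (lam i))) :
    Matrix.trace ((1 - P + Matrix.vecMulVec (fun _ => 1) π)⁻¹) - 1 =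
      ∑ i : Fin n, 1 / (1 - lam i.castSucc) := by
  set E : Matrix (Fin (n+1)) (Fin (n+1)) ℝ := Matrix.vecMulVec (fun _ => 1) π with hE
  set M : Matrix (Fin (n+1)) (Fin (n+1)) ℝ := 1 - P + E with hM
  have hPE : P * E = E := by
    ext i j
    simp only [Matrix.mul_apply, hE, Matrix.vecMulVec_apply, one_mul]
    rw [← Finset.sum_mul, hProw, one_mul]
  have hEP : E * P = E := by
    ext i j
    have h := congrFun hstat j
    simp only [Matrix.vecMul, dotProduct] at h
    simp only [Matrix.mul_apply, hE, Matrix.vecMulVec_apply, one_mul]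
    exact h
  have hE2 : E * E = E := by
    ext i j
    simp only [Matrix.mul_apply, hE, Matrix.vecMulVec_apply, one_mul]
    rw [← Finset.sum_mul, hπsum, one_mul]
  have key : ∀ y : ℝ, (y • (1 : Matrix (Fin (n+1)) (Fin (n+1)) ℝ) - P + E) *
      (y • 1 - E) = y • (y • (1 : Matrix (Fin (n+1)) (Fin (n+1)) ℝ) - P) := by
    intro y
    simp only [Matrix.add_mul, Matrix.sub_mul, Matrix.mul_sub, Matrix.smul_mul,
      Matrix.mul_smul, Matrix.one_mul, Matrix.mul_one, hPE, hE2]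
    module
  have hdetP : ∀ y : ℝ, (y • (1 : Matrix (Fin (n+1)) (Fin (n+1)) ℝ) - P).det
      = ∏ i : Fin (n+1), (y - lam i) := by
    intro y
    rw [← kem_eval_charpoly, hchar, Polynomial.eval_prod]
    simp
  have hdetE : ∀ y : ℝ, y ≠ 0 → (y • (1 : Matrix (Fin (n+1)) (Fin (n+1)) ℝ) - E).det
      = y ^ n * (y - 1) := by
    intro y hy
    have hd : π ⬝ᵥ (fun _ => (1:ℝ)) = 1 := by simpa [dotProduct] using hπsum
    rw [hE, kem_det_smul_one_sub_vecMulVec _ _ hy, hd, Fintype.card_fin]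
    field_simp
    ring
  set ν : Fin (n+1) → ℝ := Fin.snoc (fun i : Fin n => 1 - lam i.castSucc) 1 with hν
  have hν_last : ν (Fin.last n) = 1 := by simp [hν]
  have hν_cast : ∀ j : Fin n, ν j.castSucc = 1 - lam j.castSucc := fun j => by simp [hν]
  have hνpos : ∀ i, 0 < ν i := by
    intro i
    refine Fin.lastCases ?_ ?_ i
    · rw [hν_last]; norm_num
    · intro j
      rw [hν_cast]
      have := hlt j.castSucc (Fin.castSucc_lt_last j)
      linarith
  have ha : ((-1:ℝ))^n * ((-1:ℝ))^n = 1 := by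
    rw [← mul_pow]; norm_num
  have hcharM : M.charpoly = ∏ i : Fin (n+1), (X - C (ν i)) := by
    have hev : ∀ x : ℝ, x ≠ 0 → x ≠ 1 →
        (M.charpoly - ∏ i : Fin (n+1), (X - C (ν i))).eval x = 0 := by
      intro x hx0 hx1
      have hy0 : (1:ℝ) - x ≠ 0 := sub_ne_zero.mpr (Ne.symm hx1)
      have hy1 : (1:ℝ) - x - 1 ≠ 0 := by
        intro h; apply hx0; linarith
      set y : ℝ := 1 - x with hy
      have h1 : x • (1 : Matrix (Fin (n+1)) (Fin (n+1)) ℝ) - M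
          = (-1 : ℝ) • (y • (1 : Matrix (Fin (n+1)) (Fin (n+1)) ℝ) - P + E) := by
        rw [hM, hy]
        module
      have h3 : (y • (1 : Matrix (Fin (n+1)) (Fin (n+1)) ℝ) - P + E).det *
          (y • (1 : Matrix (Fin (n+1)) (Fin (n+1)) ℝ) - E).det
          = y^(n+1) * (y • (1 : Matrix (Fin (n+1)) (Fin (n+1)) ℝ) - P).det := by
        rw [← Matrix.det_mul, key y, Matrix.det_smul, Fintype.card_fin]
      have hsplit : ∏ i : Fin (n+1), (y - lam i)
          = (∏ i : Fin n, (y - lam i.castSucc)) * (y - 1) := by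
        rw [Fin.prod_univ_castSucc, htop]
      have h4 : (y • (1 : Matrix (Fin (n+1)) (Fin (n+1)) ℝ) - P + E).det
          = y * ∏ i : Fin n, (y - lam i.castSucc) := by
        have hne : y^n * (y-1) ≠ 0 := mul_ne_zero (pow_ne_zero _ hy0) hy1
        have h5 : (y • (1 : Matrix (Fin (n+1)) (Fin (n+1)) ℝ) - P + E).det * (y^n * (y-1))
            = y^(n+1) * ((∏ i : Fin n, (y - lam i.castSucc)) * (y - 1)) := by
          rw [← hdetE y hy0, h3, hdetP y, hsplit]
        apply mul_right_cancel₀ hne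
        rw [h5]
        ring
      have hp : ∏ i : Fin n, (y - lam i.castSucc)
          = (-1:ℝ)^n * ∏ i : Fin n, (x - (1 - lam i.castSucc)) := by
        rw [Finset.prod_congr rfl (fun i _ => (by rw [hy]; ring :
          (y - lam i.castSucc) = -(x - (1 - lam i.castSucc)))),
          kem_prod_neg, Fintype.card_fin]
      rw [Polynomial.eval_sub, kem_eval_charpoly, h1, Matrix.det_smul, Fintype.card_fin,
        h4, hp, Polynomial.eval_prod, Fin.prod_univ_castSucc]
      simp only [Polynomial.eval_sub, Polynomial.eval_X, Polynomial.eval_C, hν_last, hν_cast]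
      rw [hy, pow_succ]
      linear_combination ((x - 1) * ∏ i : Fin n, (x - (1 - lam i.castSucc))) * ha
    have hinf : {x : ℝ | (M.charpoly - ∏ i : Fin (n+1), (X - C (ν i))).IsRoot x}.Infinite := by
      refine Set.Infinite.mono ?_ (((Set.finite_singleton (1:ℝ)).insert 0).infinite_compl)
      intro x hx
      simp only [Set.mem_compl_iff, Set.mem_insert_iff, Set.mem_singleton_iff, not_or] at hx
      exact hev x hx.1 hx.2
    exact sub_eq_zero.mp (Polynomial.eq_zero_of_infinite_isRoot _ hinf)
  have hsgn : ((-1:ℝ))^(n+1) ≠ 0 := pow_ne_zero _ (by norm_num)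
  have hdetM : M.det = ∏ i : Fin (n+1), ν i := by
    have h0 : M.charpoly.eval 0 = (-1:ℝ)^(n+1) * M.det := by
      rw [kem_eval_charpoly, zero_smul, zero_sub, Matrix.det_neg, Fintype.card_fin]
    have h0' : M.charpoly.eval 0 = (-1:ℝ)^(n+1) * ∏ i : Fin (n+1), ν i := by
      rw [hcharM, Polynomial.eval_prod]
      simp only [Polynomial.eval_sub, Polynomial.eval_X, Polynomial.eval_C, zero_sub]
      rw [kem_prod_neg, Fintype.card_fin]
    exact mul_left_cancel₀ hsgn (h0.symm.trans h0')
  have hdet_pos : 0 < ∏ i : Fin (n+1), ν i := Finset.prod_pos (fun i _ => hνpos i)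
  have hdetU : IsUnit M.det := by rw [hdetM]; exact hdet_pos.ne'.isUnit
  have hcharMi : (M⁻¹).charpoly = ∏ i : Fin (n+1), (X - C (ν i)⁻¹) := by
    have hev : ∀ x : ℝ, x ≠ 0 →
        ((M⁻¹).charpoly - ∏ i : Fin (n+1), (X - C (ν i)⁻¹)).eval x = 0 := by
      intro x hx
      have h1 : x • (1 : Matrix (Fin (n+1)) (Fin (n+1)) ℝ) - M⁻¹ = M⁻¹ * (x • M - 1) := by
        rw [Matrix.mul_sub, Matrix.mul_smul, Matrix.nonsing_inv_mul M hdetU, Matrix.mul_one]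
      have h2 : x • M - (1 : Matrix (Fin (n+1)) (Fin (n+1)) ℝ)
          = (-x) • (x⁻¹ • (1 : Matrix (Fin (n+1)) (Fin (n+1)) ℝ) - M) := by
        rw [smul_sub, smul_smul, neg_mul, mul_inv_cancel₀ hx]
        module
      have hdinv : (M⁻¹).det = (∏ i : Fin (n+1), ν i)⁻¹ := by
        rw [Matrix.det_nonsing_inv, Ring.inverse_eq_inv, hdetM]
      rw [Polynomial.eval_sub, kem_eval_charpoly, h1, Matrix.det_mul, h2, Matrix.det_smul,
        ← kem_eval_charpoly, hcharM, Polynomial.eval_prod, Fintype.card_fin, hdinv,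
        Polynomial.eval_prod]
      simp only [Polynomial.eval_sub, Polynomial.eval_X, Polynomial.eval_C]
      rw [← Finset.prod_inv_distrib, show ((-x)^(n+1) : ℝ)
        = ∏ _i : Fin (n+1), (-x) from by rw [Finset.prod_const, Finset.card_univ,
          Fintype.card_fin], ← Finset.prod_mul_distrib, ← Finset.prod_mul_distrib]
      rw [Finset.prod_congr rfl (fun i _ => (by
        have hνne : ν i ≠ 0 := (hνpos i).ne'
        field_simp
        ring : (ν i)⁻¹ * (-x * (x⁻¹ - ν i)) = x - (ν i)⁻¹))]
      ring
    have hinf : {x : ℝ |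
        ((M⁻¹).charpoly - ∏ i : Fin (n+1), (X - C (ν i)⁻¹)).IsRoot x}.Infinite := by
      refine Set.Infinite.mono ?_ ((Set.finite_singleton (0:ℝ)).infinite_compl)
      intro x hx
      simp only [Set.mem_compl_iff, Set.mem_singleton_iff] at hx
      exact hev x hx
    exact sub_eq_zero.mp (Polynomial.eq_zero_of_infinite_isRoot _ hinf)
  have htr : (M⁻¹).trace = ∑ i : Fin (n+1), (ν i)⁻¹ := by
    rw [Matrix.trace_eq_neg_charpoly_coeff, hcharMi]
    have hdeg : (∏ i : Fin (n+1), (X - C (ν i)⁻¹)).natDegree = n + 1 := by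
      rw [← hcharMi, Matrix.charpoly_natDegree_eq_dim, Fintype.card_fin]
    rw [show Fintype.card (Fin (n+1)) - 1
        = (∏ i : Fin (n+1), (X - C (ν i)⁻¹)).natDegree - 1 from by
      rw [hdeg, Fintype.card_fin],
      ← Polynomial.nextCoeff_of_natDegree_pos (by rw [hdeg]; omega),
      Polynomial.prod_X_sub_C_nextCoeff]
    simp
  rw [htr, Fin.sum_univ_castSucc, hν_last, inv_one]
  simp only [hν_cast, one_div]
  ring
end
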